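/- Let T be a locally finite rooted tree with Σ_k μ_k < ∞, p > 1, and λ_p = inf{D_p(f) : μ(|f|^p) = 1, f_o = 0}. For any f with f_o = 0 such that f_i > f_{i*} along 𝒫(k) for some vertex k and f_i = f_{i*} for |i| ≥ |k| (i.e. f ∈ 𝔉̃_I), one has λ_p ≤ sup_{i ∈ V\{o}} I_i(f)^{-1}, where I_i(f) = (v_i (f_i - f_{i*})^{p-1})^{-1} Σ_{j ∈ V_i} μ_j f_j^{p-1}. -/

import Mathlib

open scoped ENNReal Classical BigOperators

/-- A rooted tree given by a parent map and a level function. -/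
structure PTree (V : Type) where
  root : V
  par : V → V
  level : V → ℕ
  level_root : level root = 0
  par_root : par root = root
  level_par : ∀ i, i ≠ root → level i = level (par i) + 1
  par_iter_root : ∀ i, par^[level i] i = root

/-- `T.anc k j` : `k` is an ancestor of `j` (or `j` itself), i.e. `j` lies in
the subtree `V_k` rooted at `k`. -/
def PTree.anc {V : Type} (T : PTree V) (k j : V) : Prop := ∃ m, T.par^[m] j = k

/-- The Dirichlet form `D_p(f) = Σ_{i ≠ o} v_i |f_i - f_{i*}|^p` (with values in `ℝ≥0∞`). -/
noncomputable def Dp {V : Type} (T : PTree V) (v : V → ℝ) (p : ℝ) (f : V → ℝ) : ℝ≥0∞ :=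
  ∑' i : {i : V // i ≠ T.root}, ENNReal.ofReal (v i.1 * |f i.1 - f (T.par i.1)| ^ p)

/-- The principal Dirichlet eigenvalue
`λ_p = inf { D_p(f) : μ(|f|^p) = 1, f_o = 0 }`. -/
noncomputable def lamP {V : Type} (T : PTree V) (v μ : V → ℝ) (p : ℝ) : ℝ≥0∞ :=
  ⨅ (f : V → ℝ) (_ : f T.root = 0)
    (_ : (∑' k : V, ENNReal.ofReal (μ k * |f k| ^ p)) = 1), Dp T v p f

/-- The single-summation operator
`I_i(f) = (v_i (f_i - f_{i*})^{p-1})⁻¹ Σ_{j ∈ V_i} μ_j f_j^{p-1}` (in `ℝ≥0∞`). -/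
noncomputable def Iop {V : Type} (T : PTree V) (v μ : V → ℝ) (p : ℝ)
    (f : V → ℝ) (i : V) : ℝ≥0∞ :=
  (∑' j : {j : V // T.anc i j}, ENNReal.ofReal (μ j.1 * f j.1 ^ (p - 1)))
    / ENNReal.ofReal (v i * (f i - f (T.par i)) ^ (p - 1))

open Real
section Aux1
namespace PTree
variable {V : Type} (T : PTree V)

lemma root_of_level_zero {j : V} (h : T.level j = 0) : j = T.root := by
  have := T.par_iter_root j
  rwa [h, Function.iterate_zero_apply] at this

lemma level_pos_of_ne_root {j : V} (h : j ≠ T.root) : 0 < T.level j := by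
  rcases Nat.eq_zero_or_pos (T.level j) with h0 | h1
  · exact absurd (T.root_of_level_zero h0) h
  · exact h1

lemma level_iterate : ∀ (m : ℕ) (j : V), m ≤ T.level j →
    T.level (T.par^[m] j) = T.level j - m := by
  intro m
  induction m with
  | zero => intro j _; simp
  | succ n ih =>
    intro j hm
    have hj : j ≠ T.root := by
      intro hr; rw [hr, T.level_root] at hm; omega
    have hpar : T.level (T.par j) = T.level j - 1 := by
      have := T.level_par j hj; omega
    have hn : n ≤ T.level (T.par j) := by omega
    rw [Function.iterate_succ_apply, ih (T.par j) hn, hpar]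
    omega

lemma iter_root (m : ℕ) : T.par^[m] T.root = T.root := by
  induction m with
  | zero => simp
  | succ n ih => rw [Function.iterate_succ_apply, T.par_root, ih]

lemma anc_elim {i j : V} (h : T.anc i j) (hi : i ≠ T.root) :
    ∃ m, m ≤ T.level j ∧ T.par^[m] j = i ∧ T.level i = T.level j - m := by
  obtain ⟨m, hm⟩ := h
  by_cases hmle : m ≤ T.level j
  · exact ⟨m, hmle, hm, by rw [← hm, T.level_iterate m j hmle]⟩
  · exfalso
    have : T.par^[m] j = T.root := by
      have : m = (m - T.level j) + T.level j := by omega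
      rw [this, Function.iterate_add_apply, T.par_iter_root, T.iter_root]
    rw [hm] at this; exact hi this

lemma anc_refl (j : V) : T.anc j j := ⟨0, rfl⟩

lemma anc_root (j : V) : T.anc T.root j := ⟨T.level j, T.par_iter_root j⟩

lemma anc_trans {a b c : V} (h1 : T.anc a b) (h2 : T.anc b c) : T.anc a c := by
  obtain ⟨m, hm⟩ := h1; obtain ⟨n, hn⟩ := h2
  exact ⟨m + n, by rw [Function.iterate_add_apply, hn, hm]⟩

lemma anc_par {i j : V} (h : T.anc i j) (hij : j ≠ i) :
    T.anc i (T.par j) := by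
  obtain ⟨m, hm⟩ := h
  cases m with
  | zero => simp at hm; exact (hij hm).elim
  | succ n => exact ⟨n, by rwa [Function.iterate_succ_apply] at hm⟩

lemma level_le_of_anc {i j : V} (h : T.anc i j) (hi : i ≠ T.root) :
    T.level i ≤ T.level j := by
  obtain ⟨m, _, _, h3⟩ := T.anc_elim h hi; omega

lemma level_lt_of_anc {i j : V} (h : T.anc i j) (hi : i ≠ T.root) (hij : j ≠ i) :
    T.level i < T.level j := by
  obtain ⟨m, h1, h2, h3⟩ := T.anc_elim h hi
  rcases Nat.eq_zero_or_pos m with h0 | hmpos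
  · subst h0; simp at h2; exact (hij h2).elim
  · have := T.level_pos_of_ne_root hi
    omega

lemma anc_root_iff {i : V} (h : T.anc i T.root) : i = T.root := by
  obtain ⟨m, hm⟩ := h; rw [T.iter_root] at hm; exact hm.symm

lemma anc_comparable {a b j : V} (ha : T.anc a j) (hb : T.anc b j) :
    T.anc a b ∨ T.anc b a := by
  obtain ⟨m, hm⟩ := ha; obtain ⟨n, hn⟩ := hb
  rcases le_total m n with h | h
  · right
    refine ⟨n - m, ?_⟩
    rw [← hm, ← Function.iterate_add_apply, Nat.sub_add_cancel h, hn]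
  · left
    refine ⟨m - n, ?_⟩
    rw [← hn, ← Function.iterate_add_apply, Nat.sub_add_cancel h, hm]

end PTree
end Aux1



section TreeStuff
variable {V : Type} (T : PTree V)

namespace PTree

noncomputable def ancFinset (j : V) : Finset V :=
  (Finset.range (T.level j + 1)).image (fun m => T.par^[m] j)

lemma mem_ancFinset {i j : V} :
    i ∈ T.ancFinset j ↔ ∃ m, m ≤ T.level j ∧ T.par^[m] j = i := by
  simp only [ancFinset, Finset.mem_image, Finset.mem_range, Nat.lt_succ_iff]

lemma self_mem_ancFinset (j : V) : j ∈ T.ancFinset j :=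
  T.mem_ancFinset.2 ⟨0, Nat.zero_le _, rfl⟩

lemma root_mem_ancFinset (j : V) : T.root ∈ T.ancFinset j :=
  T.mem_ancFinset.2 ⟨T.level j, le_refl _, T.par_iter_root j⟩

lemma anc_of_mem_ancFinset {i j : V} (h : i ∈ T.ancFinset j) : T.anc i j := by
  obtain ⟨m, _, hm⟩ := T.mem_ancFinset.1 h; exact ⟨m, hm⟩

lemma mem_ancFinset_of_anc {i j : V} (h : T.anc i j) (hi : i ≠ T.root) :
    i ∈ T.ancFinset j := by
  obtain ⟨m, h1, h2, _⟩ := T.anc_elim h hi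
  exact T.mem_ancFinset.2 ⟨m, h1, h2⟩

lemma level_le_of_mem_ancFinset {i j : V} (h : i ∈ T.ancFinset j) :
    T.level i ≤ T.level j := by
  obtain ⟨m, h1, h2⟩ := T.mem_ancFinset.1 h
  rw [← h2, T.level_iterate m j h1]; omega

lemma ancFinset_root : T.ancFinset T.root = {T.root} := by
  ext i
  simp only [Finset.mem_singleton]
  rw [mem_ancFinset]
  constructor
  · rintro ⟨m, _, hm⟩; rw [T.iter_root] at hm; exact hm.symm
  · rintro rfl; exact ⟨0, by simp [T.level_root]⟩

lemma ancFinset_eq_insert {j : V} (hj : j ≠ T.root) :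
    T.ancFinset j = insert j (T.ancFinset (T.par j)) := by
  have hlev : T.level j = T.level (T.par j) + 1 := T.level_par j hj
  ext i
  simp only [Finset.mem_insert]
  rw [mem_ancFinset, mem_ancFinset]
  constructor
  · rintro ⟨m, h1, h2⟩
    cases m with
    | zero => left; exact h2.symm
    | succ n =>
      right
      rw [Function.iterate_succ_apply] at h2
      exact ⟨n, by omega, h2⟩
  · rintro (rfl | ⟨n, h1, h2⟩)
    · exact ⟨0, Nat.zero_le _, rfl⟩
    · exact ⟨n + 1, by omega, by rwa [Function.iterate_succ_apply]⟩

lemma not_mem_ancFinset_par {j : V} (hj : j ≠ T.root) :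
    j ∉ T.ancFinset (T.par j) := by
  intro h
  have h1 := T.level_le_of_mem_ancFinset h
  have h2 := T.level_par j hj
  omega

end PTree
end TreeStuff



section RealCore
variable {p : ℝ} (hp : 1 < p)

noncomputable def rr (p : ℝ) : ℝ := max (Real.cos ((p-1) * Real.pi)) 0
noncomputable def kap (p : ℝ) : ℝ := (rr p) ^ (1/(p-1) : ℝ)

lemma rr_nonneg : 0 ≤ rr p := le_max_right _ _
lemma rr_le_one : rr p ≤ 1 := max_le (Real.cos_le_one _) zero_le_one
lemma kap_nonneg : 0 ≤ kap p := Real.rpow_nonneg rr_nonneg _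
lemma kap_abs_nonneg (x : ℝ) : 0 ≤ kap p * |x| := mul_nonneg kap_nonneg (abs_nonneg x)
include hp
lemma kap_le_one : kap p ≤ 1 :=
  Real.rpow_le_one rr_nonneg rr_le_one (div_nonneg zero_le_one (by linarith))

lemma kap_rpow : (kap p) ^ (p - 1) = rr p := by
  rw [kap, ← Real.rpow_mul rr_nonneg]
  rw [one_div, inv_mul_cancel₀ (by linarith : p - 1 ≠ 0), Real.rpow_one]

omit hp

lemma rpow_neg_formula {x : ℝ} (q : ℝ) (hx : x < 0) :
    x ^ q = |x| ^ q * Real.cos (q * Real.pi) := by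
  rw [Real.rpow_def_of_neg hx, Real.rpow_def_of_pos (abs_pos.2 hx.ne), Real.log_abs]

include hp

/-- P3 core -/
lemma core_dom {x y : ℝ} (hxy : max x (kap p * |x|) ≤ y) :
    x ^ (p - 1) ≤ y ^ (p - 1) := by
  have hq : (0:ℝ) < p - 1 := by linarith
  have hy0 : 0 ≤ y := le_trans (kap_abs_nonneg x) (le_trans (le_max_right _ _) hxy)
  rcases le_or_gt 0 x with hx | hx
  · exact Real.rpow_le_rpow hx (le_trans (le_max_left _ _) hxy) hq.le
  · have h1 : x ^ (p-1) = |x| ^ (p-1) * Real.cos ((p-1) * Real.pi) := rpow_neg_formula _ hx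
    have h2 : |x| ^ (p-1) * Real.cos ((p-1)*Real.pi) ≤ |x| ^ (p-1) * rr p :=
      mul_le_mul_of_nonneg_left (le_max_left _ _) (Real.rpow_nonneg (abs_nonneg x) _)
    have h3 : |x| ^ (p-1) * rr p = (kap p * |x|) ^ (p-1) := by
      rw [Real.mul_rpow (kap_nonneg) (abs_nonneg x), kap_rpow hp, mul_comm]
    have h4 : (kap p * |x|) ^ (p-1) ≤ y ^ (p-1) :=
      Real.rpow_le_rpow (kap_abs_nonneg x) (le_trans (le_max_right _ _) hxy) hq.le
    calc x ^ (p-1) = |x| ^ (p-1) * Real.cos ((p-1) * Real.pi) := h1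
      _ ≤ |x| ^ (p-1) * rr p := h2
      _ = (kap p * |x|) ^ (p-1) := h3
      _ ≤ y ^ (p-1) := h4

/-- P2 core : jump inequality. -/
lemma core_jump {a b G : ℝ} (hG : max b (kap p * |b|) ≤ G)
    (hjump : G < max a (kap p * |a|)) :
    (max a (kap p * |a|) - G) ^ (p-1) ≤ (a - b) ^ (p-1) := by
  have hq : (0:ℝ) < p - 1 := by linarith
  have hG0 : 0 ≤ G := le_trans (kap_abs_nonneg b) (le_trans (le_max_right _ _) hG)
  have hbG : b ≤ G := le_trans (le_max_left _ _) hG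
  rcases le_or_gt 0 a with ha | ha
  · have hmax : max a (kap p * |a|) = a := by
      rw [max_eq_left]
      rw [abs_of_nonneg ha]
      nlinarith [kap_le_one hp, kap_nonneg (p := p)]
    rw [hmax]
    exact Real.rpow_le_rpow (by linarith [hmax ▸ hjump]) (by linarith) hq.le
  · have hmax : max a (kap p * |a|) = kap p * |a| := by
      rw [max_eq_right]
      exact le_trans ha.le (kap_abs_nonneg a)
    rw [hmax] at hjump ⊢
    -- κ > 0
    have habs : |a| = -a := abs_of_neg ha
    have hκpos : 0 < kap p := by
      rcases lt_or_ge 0 (kap p) with h | h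
      · exact h
      · exfalso
        have : kap p * |a| ≤ 0 := mul_nonpos_of_nonpos_of_nonneg h (abs_nonneg a)
        linarith
    have hrpos : 0 < rr p := by
      have := kap_rpow hp (p := p)
      rw [← this]
      exact Real.rpow_pos_of_pos hκpos _
    have hrcos : rr p = Real.cos ((p-1) * Real.pi) := by
      rcases max_cases (Real.cos ((p-1) * Real.pi)) (0:ℝ) with ⟨h1, _⟩ | ⟨h1, h2⟩
      · exact h1
      · exfalso; rw [rr] at hrpos; rw [h1] at hrpos; exact lt_irrefl _ hrpos
    -- G ≥ -κ b
    have hGb : -(kap p * b) ≤ G := by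
      rcases le_or_gt 0 b with hb | hb
      · nlinarith
      · have : kap p * |b| ≤ G := le_trans (le_max_right _ _) hG
        rwa [abs_of_neg hb, mul_neg] at this
    -- Δ ≤ κ (b - a)
    have hΔle : kap p * |a| - G ≤ kap p * (b - a) := by
      rw [habs]; ring_nf; nlinarith
    have hba : 0 < b - a := by
      by_contra hc
      push_neg at hc
      nlinarith
    have h1 : (kap p * |a| - G) ^ (p-1) ≤ (kap p * (b-a)) ^ (p-1) :=
      Real.rpow_le_rpow (by linarith) hΔle hq.le
    have h2 : (kap p * (b-a)) ^ (p-1) = rr p * (b-a)^(p-1) := by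
      rw [Real.mul_rpow kap_nonneg hba.le, kap_rpow hp]
    have h3 : (a - b) ^ (p-1) = (b-a)^(p-1) * Real.cos ((p-1) * Real.pi) := by
      have hab : a - b < 0 := by linarith
      rw [rpow_neg_formula _ hab, abs_of_neg hab]
      ring_nf
    rw [h3, ← hrcos]
    calc (kap p * |a| - G) ^ (p-1) ≤ (kap p * (b-a)) ^ (p-1) := h1
      _ = rr p * (b-a)^(p-1) := h2
      _ = (b-a)^(p-1) * rr p := by ring
      _ ≤ (b-a)^(p-1) * rr p := le_refl _

end RealCore

section GG
variable {V : Type} (T : PTree V) (p : ℝ) (f : V → ℝ)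

noncomputable def hh : V → ℝ := fun j => max (f j) (kap p * |f j|)
noncomputable def gg : V → ℝ :=
  fun j => (T.ancFinset j).sup' ⟨j, T.self_mem_ancFinset j⟩ (hh p f)
noncomputable def dlt : V → ℝ := fun i => gg T p f i - gg T p f (T.par i)

variable {T p f}

lemma hh_nonneg (j : V) : 0 ≤ hh p f j := le_trans (kap_abs_nonneg _) (le_max_right _ _)

lemma f_le_hh (j : V) : f j ≤ hh p f j := le_max_left _ _

lemma hh_le_gg (j : V) : hh p f j ≤ gg T p f j :=
  Finset.le_sup' _ (T.self_mem_ancFinset j)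

lemma gg_nonneg (j : V) : 0 ≤ gg T p f j :=
  le_trans (hh_nonneg j) (hh_le_gg j)

lemma hh_root (hf0 : f T.root = 0) : hh p f T.root = 0 := by
  simp [hh, hf0]

lemma gg_root (hf0 : f T.root = 0) : gg T p f T.root = 0 := by
  have h : gg T p f T.root ≤ 0 := by
    rw [gg]
    apply Finset.sup'_le
    intro i hi
    rw [T.ancFinset_root, Finset.mem_singleton] at hi
    subst hi
    rw [hh_root hf0]
  exact le_antisymm h (gg_nonneg _)

lemma gg_par_le (j : V) : gg T p f (T.par j) ≤ gg T p f j := by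
  by_cases hj : j = T.root
  · subst hj; rw [T.par_root]
  · rw [gg, gg]
    apply Finset.sup'_le
    intro i hi
    apply Finset.le_sup'
    rw [T.ancFinset_eq_insert hj]
    exact Finset.mem_insert_of_mem hi

lemma gg_eq_max {j : V} (hj : j ≠ T.root) :
    gg T p f j = max (hh p f j) (gg T p f (T.par j)) := by
  rw [gg]
  have hne : (T.ancFinset (T.par j)).Nonempty := ⟨T.par j, T.self_mem_ancFinset _⟩
  rw [show ((T.ancFinset j).sup' ⟨j, T.self_mem_ancFinset j⟩ (hh p f)) =
      ((insert j (T.ancFinset (T.par j))).sup'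
        (Finset.insert_nonempty _ _) (hh p f)) from by
    congr 1
    exact T.ancFinset_eq_insert hj]
  rw [Finset.sup'_insert hne]
  rfl

lemma dlt_nonneg (i : V) : 0 ≤ dlt T p f i := sub_nonneg.2 (gg_par_le i)

lemma jump_hh {i : V} (hi : i ≠ T.root) (hd : 0 < dlt T p f i) :
    gg T p f (T.par i) < hh p f i ∧ gg T p f i = hh p f i := by
  have h := gg_eq_max (T := T) (p := p) (f := f) hi
  have hlt : gg T p f (T.par i) < gg T p f i := by
    have := hd; rw [dlt] at this; linarith
  constructor
  · by_contra hc
    push_neg at hc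
    rw [h, max_eq_right hc] at hlt
    exact lt_irrefl _ hlt
  · rw [h]
    apply max_eq_left
    by_contra hc
    push_neg at hc
    rw [h, max_eq_right hc.le] at hlt
    exact lt_irrefl _ hlt

variable (hp : 1 < p)
include hp

lemma fP3 (j : V) : f j ^ (p - 1) ≤ gg T p f j ^ (p - 1) :=
  core_dom hp (hh_le_gg j)

lemma fP2 {i : V} (hi : i ≠ T.root) (hd : 0 < dlt T p f i) :
    dlt T p f i ^ (p-1) ≤ (f i - f (T.par i)) ^ (p-1) := by
  obtain ⟨h1, h2⟩ := jump_hh hi hd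
  have hG : max (f (T.par i)) (kap p * |f (T.par i)|) ≤ gg T p f (T.par i) := hh_le_gg _
  have key := core_jump hp hG (show gg T p f (T.par i) < max (f i) (kap p * |f i|) from h1)
  have : dlt T p f i = max (f i) (kap p * |f i|) - gg T p f (T.par i) := by
    rw [dlt, h2]; rfl
  rw [this]
  exact key

omit hp

lemma tele (hf0 : f T.root = 0) :
    ∀ j, (∑ i ∈ T.ancFinset j, (if i ≠ T.root then dlt T p f i else 0)) = gg T p f j := by
  suffices H : ∀ n j, T.level j = n →
      (∑ i ∈ T.ancFinset j, (if i ≠ T.root then dlt T p f i else 0)) = gg T p f j by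
    exact fun j => H _ j rfl
  intro n
  induction n using Nat.strong_induction_on with
  | _ n ih =>
    intro j hj
    by_cases hroot : j = T.root
    · subst hroot
      rw [T.ancFinset_root, Finset.sum_singleton, if_neg (by simp), gg_root hf0]
    · rw [T.ancFinset_eq_insert hroot,
        Finset.sum_insert (T.not_mem_ancFinset_par hroot),
        if_pos hroot]
      have hlev : T.level (T.par j) < n := by
        have := T.level_par j hroot; omega
      rw [ih _ hlev (T.par j) rfl]
      rw [dlt]
      ring

lemma jump_level {k i : V} (hfr : ∀ i, T.level k < T.level i → f i = f (T.par i))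
    (hd : 0 < dlt T p f i) : T.level i ≤ T.level k := by
  by_contra hc
  push_neg at hc
  have hi : i ≠ T.root := by
    intro h; subst h; rw [T.level_root] at hc; omega
  have hfi : f i = f (T.par i) := hfr i hc
  have : hh p f i ≤ gg T p f (T.par i) := by
    rw [show hh p f i = hh p f (T.par i) from by unfold hh; rw [hfi]]
    exact hh_le_gg _
  have h := gg_eq_max (T := T) (p := p) (f := f) hi
  rw [dlt] at hd
  rw [h, max_eq_right this] at hd
  linarith

end GG

section ENN
variable {V : Type} (T : PTree V) (v μ : V → ℝ) (p : ℝ) (f : V → ℝ)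

noncomputable def NI : V → ℝ≥0∞ := fun i =>
  ∑' j : V, if T.anc i j then ENNReal.ofReal (μ j * f j ^ (p-1)) else 0

noncomputable def PX : V → ℝ≥0∞ := fun x =>
  ∑' j : V, if T.anc x j then ENNReal.ofReal (μ j * (gg T p f j) ^ p) else 0

noncomputable def XP (w : V → ℝ) : ℝ≥0∞ := ∑' j : V, ENNReal.ofReal (μ j * |w j| ^ p)

noncomputable def wA (A : Set V) : V → ℝ := fun j =>
  ∑ i ∈ T.ancFinset j, (if i ∈ A ∧ i ≠ T.root then dlt T p f i else 0)

variable {T v μ p f}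

lemma tsum_subtype_ite {P : V → Prop} (g : V → ℝ≥0∞) :
    ∑' (j : {x : V // P x}), g j.1 = ∑' j : V, if P j then g j else 0 := by
  have h0 : ∑' (j : {x : V // P x}), g j.1 = ∑' (j : {x : V | P x}), g j.1 := rfl
  rw [h0, tsum_subtype {x : V | P x} g]
  exact tsum_congr fun j => Set.indicator_apply {x : V | P x} g j

lemma Iop_eq (i : V) : Iop T v μ p f i
    = NI T μ p f i / ENNReal.ofReal (v i * (f i - f (T.par i)) ^ (p-1)) := by
  rw [Iop, NI]
  congr 1
  exact tsum_subtype_ite (fun j => ENNReal.ofReal (μ j * f j ^ (p-1)))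

lemma wA_root (A : Set V) : wA T p f A T.root = 0 := by
  rw [wA, T.ancFinset_root, Finset.sum_singleton, if_neg (by simp)]

lemma wA_nonneg (A : Set V) (j : V) : 0 ≤ wA T p f A j := by
  apply Finset.sum_nonneg
  intro i _
  by_cases h : i ∈ A ∧ i ≠ T.root
  · rw [if_pos h]; exact dlt_nonneg i
  · rw [if_neg h]

lemma wA_succ (A : Set V) {i : V} (hi : i ≠ T.root) :
    wA T p f A i = (if i ∈ A then dlt T p f i else 0) + wA T p f A (T.par i) := by
  rw [wA, wA, T.ancFinset_eq_insert hi,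
    Finset.sum_insert (T.not_mem_ancFinset_par hi)]
  congr 1
  by_cases h : i ∈ A
  · rw [if_pos ⟨h, hi⟩, if_pos h]
  · rw [if_neg (fun hc => h hc.1), if_neg h]

lemma wA_jump (A : Set V) {i : V} (hi : i ≠ T.root) :
    wA T p f A i - wA T p f A (T.par i) = (if i ∈ A then dlt T p f i else 0) := by
  rw [wA_succ A hi]; ring

lemma ofReal_wA (A : Set V) (j : V) :
    ENNReal.ofReal (wA T p f A j)
      = ∑ i ∈ T.ancFinset j,
          (if i ∈ A ∧ i ≠ T.root then ENNReal.ofReal (dlt T p f i) else 0) := by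
  rw [wA, ENNReal.ofReal_sum_of_nonneg]
  · apply Finset.sum_congr rfl
    intro i _
    by_cases h : i ∈ A ∧ i ≠ T.root
    · rw [if_pos h, if_pos h]
    · rw [if_neg h, if_neg h, ENNReal.ofReal_zero]
  · intro i _
    by_cases h : i ∈ A ∧ i ≠ T.root
    · rw [if_pos h]; exact dlt_nonneg i
    · rw [if_neg h]

lemma wA_le_gg (hf0 : f T.root = 0) (A : Set V) (j : V) :
    wA T p f A j ≤ gg T p f j := by
  rw [← tele hf0 j, wA]
  apply Finset.sum_le_sum
  intro i _
  by_cases h : i ∈ A ∧ i ≠ T.root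
  · rw [if_pos h, if_pos h.2]
  · rw [if_neg h]
    by_cases h2 : i ≠ T.root
    · rw [if_pos h2]; exact dlt_nonneg i
    · rw [if_neg h2]

end ENN

section TESTKEY
variable {V : Type} {T : PTree V} {v μ : V → ℝ} {p : ℝ} {f : V → ℝ}

lemma test_le (hp : 1 < p) (w : V → ℝ) (hw0 : w T.root = 0)
    (hX0 : XP μ p w ≠ 0) (hXt : XP μ p w ≠ ⊤) :
    lamP T v μ p ≤ Dp T v p w / XP μ p w := by
  have hppos : (0:ℝ) < p := by linarith
  set X := XP μ p w with hX
  set c : ℝ := (X.toReal) ^ (-(1/p) : ℝ) with hc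
  have hc0 : 0 ≤ c := Real.rpow_nonneg ENNReal.toReal_nonneg _
  have hcp : c ^ p = (X.toReal)⁻¹ := by
    rw [hc, ← Real.rpow_mul ENNReal.toReal_nonneg,
      show (-(1/p)) * p = -1 by field_simp, Real.rpow_neg_one]
  have hcp' : ENNReal.ofReal (c ^ p) = X⁻¹ := by
    rw [hcp, ENNReal.ofReal_inv_of_pos (ENNReal.toReal_pos hX0 hXt),
      ENNReal.ofReal_toReal hXt]
  have hscale : ∀ (a t : ℝ), ENNReal.ofReal (a * |c*t|^p)
      = ENNReal.ofReal (c^p) * ENNReal.ofReal (a * |t|^p) := by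
    intro a t
    rw [abs_mul, abs_of_nonneg hc0, Real.mul_rpow hc0 (abs_nonneg t),
      show a * (c^p * |t|^p) = c^p * (a * |t|^p) by ring,
      ENNReal.ofReal_mul (Real.rpow_nonneg hc0 p)]
  have hcon : (∑' j : V, ENNReal.ofReal (μ j * |(fun x => c * w x) j| ^ p)) = 1 := by
    calc (∑' j : V, ENNReal.ofReal (μ j * |(fun x => c * w x) j| ^ p))
        = ∑' j : V, ENNReal.ofReal (c^p) * ENNReal.ofReal (μ j * |w j|^p) :=
          tsum_congr (fun j => hscale _ _)
      _ = ENNReal.ofReal (c^p) * X := by rw [ENNReal.tsum_mul_left]; rfl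
      _ = X⁻¹ * X := by rw [hcp']
      _ = 1 := ENNReal.inv_mul_cancel hX0 hXt
  have h0 : (fun x => c * w x) T.root = 0 := by simp [hw0]
  have hstep : lamP T v μ p ≤ Dp T v p (fun x => c * w x) := by
    refine le_trans (iInf_le _ (fun x => c * w x)) ?_
    exact le_trans (iInf_le _ h0) (iInf_le _ hcon)
  have hDp : Dp T v p (fun x => c * w x) = ENNReal.ofReal (c^p) * Dp T v p w := by
    rw [Dp, Dp, ← ENNReal.tsum_mul_left]
    apply tsum_congr
    intro i
    rw [show c * w ↑i - c * w (T.par ↑i) = c * (w ↑i - w (T.par ↑i)) by ring]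
    exact hscale _ _
  rw [hDp, hcp', ← ENNReal.div_eq_inv_mul] at hstep
  exact hstep

lemma key_lemma (hp : 1 < p) (hv : ∀ i, 0 < v i) (hμ : ∀ i, 0 < μ i)
    (A : Set V) (B0 : Finset V) (M : ℝ≥0∞)
    (hM : ∀ i, i ≠ T.root →
      ENNReal.ofReal (v i * (f i - f (T.par i)) ^ (p-1)) ≤ M * NI T μ p f i)
    (HF : ∀ i, i ∈ A → i ≠ T.root → 0 < dlt T p f i → i ∉ B0 →
        ∀ j, T.anc i j → wA T p f A j = gg T p f j) :
    Dp T v p (wA T p f A) ≤ (∑ i ∈ B0, ENNReal.ofReal (v i * dlt T p f i ^ p))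
      + M * XP μ p (wA T p f A) := by
  have hppos : (0:ℝ) < p := by linarith
  have hpne : p ≠ 0 := ne_of_gt hppos
  have hqpos : (0:ℝ) < p - 1 := by linarith
  classical
  set ψ : V → V → ℝ≥0∞ := fun i j =>
    if (i ∈ A ∧ i ≠ T.root ∧ T.anc i j) then
      ENNReal.ofReal (dlt T p f i) * ENNReal.ofReal (μ j * (wA T p f A j)^(p-1))
    else 0 with hψ
  -- step 1 : pointwise bound on Dp terms
  have hDp1 : Dp T v p (wA T p f A)
      ≤ (∑' i : {i : V // i ≠ T.root},
            if (i : V) ∈ B0 then ENNReal.ofReal (v i * dlt T p f i ^ p) else 0)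
        + (∑' i : {i : V // i ≠ T.root},
            if ((i : V) ∈ A ∧ (i : V) ∉ B0) then
              ENNReal.ofReal (v i * dlt T p f i ^ p) else 0) := by
    rw [Dp, ← ENNReal.tsum_add]
    apply ENNReal.tsum_le_tsum
    intro i
    have hjump : wA T p f A ↑i - wA T p f A (T.par ↑i)
        = (if (i:V) ∈ A then dlt T p f ↑i else 0) := wA_jump A i.2
    rw [hjump]
    by_cases hA : (i:V) ∈ A
    · rw [if_pos hA, abs_of_nonneg (dlt_nonneg _)]
      by_cases hB : (i:V) ∈ B0
      · rw [if_pos hB, if_neg (fun hc => hc.2 hB)]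
        exact le_add_right (le_refl _)
      · rw [if_neg hB, if_pos ⟨hA, hB⟩]
        exact le_add_left (le_refl _)
    · rw [if_neg hA, abs_zero, Real.zero_rpow hpne, mul_zero, ENNReal.ofReal_zero]
      exact zero_le
  -- step 2 : B0 part
  have hS1 : (∑' i : {i : V // i ≠ T.root},
        if (i : V) ∈ B0 then ENNReal.ofReal (v i * dlt T p f i ^ p) else 0)
      ≤ ∑ i ∈ B0, ENNReal.ofReal (v i * dlt T p f i ^ p) := by
    refine le_trans (ENNReal.tsum_comp_le_tsum_of_injective Subtype.val_injective
      (fun i => if i ∈ B0 then ENNReal.ofReal (v i * dlt T p f i ^ p) else 0)) ?_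
    rw [tsum_eq_sum (s := B0) (fun i hi => if_neg hi)]
    apply le_of_eq
    exact Finset.sum_congr rfl (fun i hi => if_pos hi)
  -- step 3 : main part
  have hper : ∀ i : {i : V // i ≠ T.root},
      (if ((i : V) ∈ A ∧ (i : V) ∉ B0) then
        ENNReal.ofReal (v i * dlt T p f i ^ p) else 0)
      ≤ M * ∑' j : V, ψ (i : V) j := by
    intro i
    by_cases hc : (i : V) ∈ A ∧ (i : V) ∉ B0
    swap
    · rw [if_neg hc]; exact zero_le
    rw [if_pos hc]
    rcases eq_or_lt_of_le (dlt_nonneg (T := T) (p := p) (f := f) (i : V)) with hd | hd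
    · rw [← hd, Real.zero_rpow hpne, mul_zero, ENNReal.ofReal_zero]
      exact zero_le
    have hWg : ∀ j, T.anc (i : V) j → wA T p f A j = gg T p f j :=
      HF (i : V) hc.1 i.2 hd hc.2
    have hδ : dlt T p f (i:V) ^ p = dlt T p f (i:V) * dlt T p f (i:V) ^ (p-1) := by
      have h2 := Real.rpow_add hd 1 (p-1)
      rw [show (1:ℝ) + (p-1) = p by ring] at h2
      rw [h2, Real.rpow_one]
    have e1 : ENNReal.ofReal (v ↑i * dlt T p f ↑i ^ p)
        = ENNReal.ofReal (dlt T p f ↑i)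
          * ENNReal.ofReal (v ↑i * dlt T p f ↑i ^ (p-1)) := by
      rw [← ENNReal.ofReal_mul (dlt_nonneg _)]
      congr 1
      rw [hδ]; ring
    have e2 : ENNReal.ofReal (v ↑i * dlt T p f ↑i ^ (p-1))
        ≤ M * NI T μ p f ↑i := by
      refine le_trans ?_ (hM ↑i i.2)
      apply ENNReal.ofReal_le_ofReal
      exact mul_le_mul_of_nonneg_left (fP2 hp i.2 hd) (hv ↑i).le
    have e4 : NI T μ p f ↑i
        ≤ ∑' j : V, if T.anc (i:V) j then
            ENNReal.ofReal (μ j * (wA T p f A j)^(p-1)) else 0 := by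
      rw [NI]
      apply ENNReal.tsum_le_tsum
      intro j
      by_cases hanc : T.anc (i:V) j
      · rw [if_pos hanc, if_pos hanc]
        apply ENNReal.ofReal_le_ofReal
        rw [hWg j hanc]
        exact mul_le_mul_of_nonneg_left (fP3 hp j) (hμ j).le
      · rw [if_neg hanc, if_neg hanc]
    have e5 : ENNReal.ofReal (dlt T p f ↑i)
          * (∑' j : V, if T.anc (i:V) j then
            ENNReal.ofReal (μ j * (wA T p f A j)^(p-1)) else 0)
        = ∑' j : V, ψ (i:V) j := by
      rw [← ENNReal.tsum_mul_left]
      apply tsum_congr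
      intro j
      by_cases hanc : T.anc (i:V) j
      · rw [if_pos hanc, hψ]
        simp only
        rw [if_pos ⟨hc.1, i.2, hanc⟩]
      · rw [if_neg hanc, mul_zero, hψ]
        simp only
        rw [if_neg (fun hcond => hanc hcond.2.2)]
    calc ENNReal.ofReal (v ↑i * dlt T p f ↑i ^ p)
        = ENNReal.ofReal (dlt T p f ↑i)
          * ENNReal.ofReal (v ↑i * dlt T p f ↑i ^ (p-1)) := e1
      _ ≤ ENNReal.ofReal (dlt T p f ↑i) * (M * NI T μ p f ↑i) :=
          mul_le_mul_right e2 _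
      _ = M * (ENNReal.ofReal (dlt T p f ↑i) * NI T μ p f ↑i) := by ring
      _ ≤ M * (ENNReal.ofReal (dlt T p f ↑i)
            * (∑' j : V, if T.anc (i:V) j then
              ENNReal.ofReal (μ j * (wA T p f A j)^(p-1)) else 0)) :=
          mul_le_mul_right (mul_le_mul_right e4 _) _
      _ = M * ∑' j : V, ψ (i:V) j := by rw [e5]
  have hinner : ∀ j : V, (∑' i : V, ψ i j)
      = ENNReal.ofReal (μ j * |wA T p f A j| ^ p) := by
    intro j
    have hout : ∀ i ∉ T.ancFinset j, ψ i j = 0 := by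
      intro i hi
      rw [hψ]
      simp only
      rw [if_neg (fun hcond => hi (T.mem_ancFinset_of_anc hcond.2.2 hcond.2.1))]
    rw [tsum_eq_sum hout]
    have hmid : ∀ i ∈ T.ancFinset j, ψ i j
        = (if i ∈ A ∧ i ≠ T.root then ENNReal.ofReal (dlt T p f i) else 0)
          * ENNReal.ofReal (μ j * (wA T p f A j)^(p-1)) := by
      intro i hi
      have hanc := T.anc_of_mem_ancFinset hi
      by_cases h2 : i ∈ A ∧ i ≠ T.root
      · rw [hψ]; simp only
        rw [if_pos ⟨h2.1, h2.2, hanc⟩, if_pos h2]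
      · rw [hψ]; simp only
        rw [if_neg (fun hcond => h2 ⟨hcond.1, hcond.2.1⟩), if_neg h2, zero_mul]
    rw [Finset.sum_congr rfl hmid, ← Finset.sum_mul, ← ofReal_wA]
    rw [← ENNReal.ofReal_mul (wA_nonneg A j)]
    congr 1
    have habs : |wA T p f A j| = wA T p f A j := abs_of_nonneg (wA_nonneg A j)
    rw [habs]
    rcases eq_or_lt_of_le (wA_nonneg (T := T) (p := p) (f := f) A j) with hw | hw
    · rw [← hw]
      simp [Real.zero_rpow hpne, Real.zero_rpow (ne_of_gt hqpos)]
    · have h2 := Real.rpow_add hw 1 (p-1)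
      rw [show (1:ℝ) + (p-1) = p by ring] at h2
      rw [h2, Real.rpow_one]
      ring
  have hS2 : (∑' i : {i : V // i ≠ T.root},
        if ((i : V) ∈ A ∧ (i : V) ∉ B0) then
          ENNReal.ofReal (v i * dlt T p f i ^ p) else 0)
      ≤ M * XP μ p (wA T p f A) := by
    calc (∑' i : {i : V // i ≠ T.root},
          if ((i : V) ∈ A ∧ (i : V) ∉ B0) then
            ENNReal.ofReal (v i * dlt T p f i ^ p) else 0)
        ≤ ∑' i : {i : V // i ≠ T.root}, M * ∑' j : V, ψ (i : V) j :=
          ENNReal.tsum_le_tsum hper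
      _ = M * ∑' i : {i : V // i ≠ T.root}, ∑' j : V, ψ (i : V) j :=
          ENNReal.tsum_mul_left
      _ ≤ M * ∑' i : V, ∑' j : V, ψ i j := by
          apply mul_le_mul_right
          exact ENNReal.tsum_comp_le_tsum_of_injective Subtype.val_injective
            (fun i => ∑' j : V, ψ i j)
      _ = M * ∑' j : V, ∑' i : V, ψ i j := by rw [ENNReal.tsum_comm]
      _ = M * XP μ p (wA T p f A) := by
          rw [XP]
          congr 1
          exact tsum_congr hinner
  exact le_trans hDp1 (add_le_add hS1 hS2)

end TESTKEY

section MAIN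
variable {V : Type} {T : PTree V} {v μ : V → ℝ} {p : ℝ} {f : V → ℝ}

lemma path_pos (hf0 : f T.root = 0) {k : V}
    (hf1 : ∀ i, i ≠ T.root → T.anc i k → f (T.par i) < f i) :
    ∀ i, T.anc i k → (0 ≤ f i ∧ (i ≠ T.root → 0 < f i)) := by
  suffices H : ∀ n i, T.level i = n → T.anc i k → (0 ≤ f i ∧ (i ≠ T.root → 0 < f i)) by
    exact fun i => H _ i rfl
  intro n
  induction n using Nat.strong_induction_on with
  | _ n ih =>
    intro i hlev hanc
    by_cases hroot : i = T.root
    · subst hroot; exact ⟨le_of_eq hf0.symm, fun h => absurd rfl h⟩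
    · have hpar_anc : T.anc (T.par i) k := by
        obtain ⟨m, hm⟩ := hanc
        exact ⟨m + 1, by rw [Function.iterate_succ_apply', hm]⟩
      have hlt : T.level (T.par i) < n := by
        have := T.level_par i hroot; omega
      have hih := ih _ hlt (T.par i) rfl hpar_anc
      have h2 := hf1 i hroot hanc
      constructor
      · linarith [hih.1]
      · intro _; linarith [hih.1]

lemma f_const_on {k : V} (hk : k ≠ T.root)
    (hf2 : ∀ i, T.level k < T.level i → f i = f (T.par i)) :
    ∀ j, T.anc k j → f j = f k := by
  suffices H : ∀ n j, T.level j = n → T.anc k j → f j = f k by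
    exact fun j => H _ j rfl
  intro n
  induction n using Nat.strong_induction_on with
  | _ n ih =>
    intro j hlev hanc
    by_cases hjk : j = k
    · subst hjk; rfl
    · have hjroot : j ≠ T.root := by
        intro h; subst h; exact hjk (T.anc_root_iff hanc).symm
      have hklev : T.level k < T.level j := T.level_lt_of_anc hanc hk hjk
      have h1 : f j = f (T.par j) := hf2 j hklev
      have h2 : T.anc k (T.par j) := T.anc_par hanc hjk
      have hlt : T.level (T.par j) < n := by
        have := T.level_par j hjroot; omega
      rw [h1, ih _ hlt (T.par j) rfl h2]

lemma gconst (i₀ : V) :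
    ∀ j, T.anc i₀ j → (∀ x, T.anc i₀ x → T.anc x j → x ≠ i₀ → dlt T p f x = 0) →
      gg T p f j = gg T p f i₀ := by
  suffices H : ∀ n j, T.level j = n → T.anc i₀ j →
      (∀ x, T.anc i₀ x → T.anc x j → x ≠ i₀ → dlt T p f x = 0) →
      gg T p f j = gg T p f i₀ by
    exact fun j => H _ j rfl
  intro n
  induction n using Nat.strong_induction_on with
  | _ n ih =>
    intro j hlev hanc hzero
    by_cases hji : j = i₀
    · subst hji; rfl
    · have hjroot : j ≠ T.root := by
        intro h; subst h
        exact hji ((T.anc_root_iff hanc).symm)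
      have hdj : dlt T p f j = 0 := hzero j hanc (T.anc_refl j) hji
      have hgg : gg T p f j = gg T p f (T.par j) := by
        rw [dlt] at hdj; linarith
      have hanc' : T.anc i₀ (T.par j) := T.anc_par hanc hji
      have hlt : T.level (T.par j) < n := by
        have := T.level_par j hjroot; omega
      rw [hgg, ih _ hlt (T.par j) rfl hanc']
      intro x hx1 hx2 hx3
      exact hzero x hx1 (T.anc_trans hx2 ⟨1, by simp⟩) hx3
end MAIN

section BAD
variable {V : Type} {T : PTree V} {v μ : V → ℝ} {p : ℝ} {f : V → ℝ}

lemma bad_case (hp : 1 < p) (hv : ∀ i, 0 < v i) (hμ : ∀ i, 0 < μ i)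
    (hmass : (∑' j : V, ENNReal.ofReal (μ j)) ≠ ⊤)
    (hf0 : f T.root = 0) {k : V}
    (hf2 : ∀ i, T.level k < T.level i → f i = f (T.par i))
    (M : ℝ≥0∞)
    (hM : ∀ i, i ≠ T.root →
      ENNReal.ofReal (v i * (f i - f (T.par i)) ^ (p-1)) ≤ M * NI T μ p f i)
    (hXG : XP μ p (gg T p f) = ⊤) :
    lamP T v μ p ≤ M := by
  classical
  have hppos : (0:ℝ) < p := by linarith
  have hjlev : ∀ x, 0 < dlt T p f x → T.level x ≤ T.level k :=
    fun x hx => jump_level hf2 hx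
  have PXroot : PX T μ p f T.root = XP μ p (gg T p f) := by
    rw [PX, XP]
    apply tsum_congr; intro j
    rw [if_pos (T.anc_root j), abs_of_nonneg (gg_nonneg j)]
  obtain ⟨i₀, Hi1, Hi2⟩ : ∃ i₀, PX T μ p f i₀ = ⊤ ∧
      (∀ x, x ≠ i₀ → T.anc i₀ x → 0 < dlt T p f x → PX T μ p f x ≠ ⊤) := by
    by_cases hB : {x : V | x ≠ T.root ∧ 0 < dlt T p f x ∧ PX T μ p f x = ⊤}.Nonempty
    · have hbdd : BddAbove
          (T.level '' {x : V | x ≠ T.root ∧ 0 < dlt T p f x ∧ PX T μ p f x = ⊤}) := by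
        refine ⟨T.level k, ?_⟩
        rintro n ⟨x, hx, rfl⟩
        exact hjlev x hx.2.1
      obtain ⟨x₀, hx₀B, hx₀lev⟩ := Nat.sSup_mem (hB.image T.level) hbdd
      refine ⟨x₀, hx₀B.2.2, ?_⟩
      intro x hx1 hx2 hx3 hPX
      have hxroot : x ≠ T.root := by
        intro h; subst h
        exact hx₀B.1 (T.anc_root_iff hx2)
      have h5 : T.level x ≤ T.level x₀ := by
        rw [hx₀lev]
        exact le_csSup hbdd (Set.mem_image_of_mem T.level ⟨hxroot, hx3, hPX⟩)
      have h6 : T.level x₀ < T.level x := T.level_lt_of_anc hx2 hx₀B.1 hx1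
      omega
    · refine ⟨T.root, by rw [PXroot]; exact hXG, ?_⟩
      intro x hx1 hx2 hx3 hPX
      exact hB ⟨x, hx1, hx3, hPX⟩
  set J' : Set V := {m | m ≠ i₀ ∧ 0 < dlt T p f m ∧ T.anc i₀ m ∧
      ∀ x, T.anc i₀ x → T.anc x m → x ≠ i₀ → x ≠ m → dlt T p f x = 0} with hJ'
  have F1 : ∀ j, T.anc i₀ j → gg T p f j = gg T p f i₀ ∨ ∃ m, m ∈ J' ∧ T.anc m j := by
    intro j hanc
    by_cases hJC : {x : V | T.anc i₀ x ∧ T.anc x j ∧ x ≠ i₀ ∧ 0 < dlt T p f x}.Nonempty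
    · right
      obtain ⟨m, hmJC, hmlev⟩ := Nat.sInf_mem (hJC.image T.level)
      refine ⟨m, ⟨hmJC.2.2.1, hmJC.2.2.2, hmJC.1, ?_⟩, hmJC.2.1⟩
      intro x hx1 hx2 hx3 hx4
      by_contra hne0
      have hxpos : 0 < dlt T p f x := lt_of_le_of_ne (dlt_nonneg x) (Ne.symm hne0)
      have h5 : sInf (T.level ''
          {x : V | T.anc i₀ x ∧ T.anc x j ∧ x ≠ i₀ ∧ 0 < dlt T p f x}) ≤ T.level x :=
        Nat.sInf_le ⟨x, ⟨hx1, T.anc_trans hx2 hmJC.2.1, hx3, hxpos⟩, rfl⟩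
      have hxroot : x ≠ T.root := by
        intro h; subst h
        exact hx3 (T.anc_root_iff hx1).symm
      have h6 : T.level x < T.level m := T.level_lt_of_anc hx2 hxroot (Ne.symm hx4)
      omega
    · left
      apply gconst i₀ j hanc
      intro x hx1 hx2 hx3
      by_contra hne0
      exact hJC ⟨x, hx1, hx2, hx3, lt_of_le_of_ne (dlt_nonneg x) (Ne.symm hne0)⟩
  have F2 : ∀ m, m ∈ J' → ∀ m', m' ∈ J' → m ≠ m' →
      ∀ j, T.anc m j → T.anc m' j → False := by
    intro m hm m' hm' hne j h1 h2
    rcases T.anc_comparable h1 h2 with hc | hc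
    · exact hm.2.1.ne' (hm'.2.2.2 m hm.2.2.1 hc hm.1 hne)
    · exact hm'.2.1.ne' (hm.2.2.2 m' hm'.2.2.1 hc hm'.1 (Ne.symm hne))
  have hdiv : (∑' m : {m : V // m ∈ J'}, PX T μ p f ↑m) = ⊤ := by
    by_contra hne
    have hpt : ∀ j : V,
        (if T.anc i₀ j then ENNReal.ofReal (μ j * (gg T p f j)^p) else 0)
        ≤ ENNReal.ofReal ((gg T p f i₀)^p) * ENNReal.ofReal (μ j)
          + ∑' m : {m : V // m ∈ J'},
              (if T.anc (↑m : V) j then ENNReal.ofReal (μ j * (gg T p f j)^p) else 0) := by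
      intro j
      by_cases hanc : T.anc i₀ j
      · rw [if_pos hanc]
        rcases F1 j hanc with hcase | ⟨m, hmJ, hmanc⟩
        · apply le_add_right
          rw [hcase, mul_comm]
          exact le_of_eq (ENNReal.ofReal_mul (Real.rpow_nonneg (gg_nonneg i₀) p))
        · apply le_add_left
          have heq : (if T.anc ((⟨m, hmJ⟩ : {m : V // m ∈ J'}) : V) j then
              ENNReal.ofReal (μ j * (gg T p f j)^p) else 0)
              = ENNReal.ofReal (μ j * (gg T p f j)^p) := if_pos hmanc
          exact le_trans (le_of_eq heq.symm) (ENNReal.le_tsum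
            (f := fun m : {m : V // m ∈ J'} => if T.anc (↑m : V) j then
              ENNReal.ofReal (μ j * (gg T p f j)^p) else 0) ⟨m, hmJ⟩)
      · rw [if_neg hanc]; exact zero_le
    have hb : PX T μ p f i₀
        ≤ ENNReal.ofReal ((gg T p f i₀)^p) * (∑' j : V, ENNReal.ofReal (μ j))
          + ∑' m : {m : V // m ∈ J'}, PX T μ p f ↑m := by
      rw [PX]
      refine le_trans (ENNReal.tsum_le_tsum hpt) ?_
      rw [ENNReal.tsum_add, ENNReal.tsum_mul_left, ENNReal.tsum_comm]
      simp only [PX]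
      exact le_rfl
    have hfin : ENNReal.ofReal ((gg T p f i₀)^p) * (∑' j : V, ENNReal.ofReal (μ j))
        + ∑' m : {m : V // m ∈ J'}, PX T μ p f ↑m ≠ ⊤ :=
      ENNReal.add_ne_top.mpr ⟨ENNReal.mul_ne_top ENNReal.ofReal_ne_top hmass, hne⟩
    rw [Hi1] at hb
    exact hfin (top_le_iff.mp hb)
  -- the per-n estimate
  have hstep : ∀ n : ℕ, lamP T v μ p
      ≤ M + (∑ i ∈ (T.ancFinset i₀).erase T.root,
          ENNReal.ofReal (v i * dlt T p f i ^ p)) / ((n : ℝ≥0∞)+1) := by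
    intro n
    obtain ⟨s, hs⟩ : ∃ s : Finset {m : V // m ∈ J'},
        ((n:ℝ≥0∞)+1) ≤ ∑ m ∈ s, PX T μ p f ↑m := by
      by_contra hcon
      push_neg at hcon
      have hle : (∑' m : {m : V // m ∈ J'}, PX T μ p f ↑m) ≤ (n:ℝ≥0∞)+1 := by
        rw [ENNReal.tsum_eq_iSup_sum]
        exact iSup_le fun s => (hcon s).le
      rw [hdiv] at hle
      exact (ENNReal.add_ne_top.mpr ⟨ENNReal.natCast_ne_top n, ENNReal.one_ne_top⟩)
        (top_le_iff.mp hle)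
    set A : Set V := {x | (T.anc x i₀ ∧ x ≠ T.root)} ∪ {x | ∃ m ∈ s, T.anc (↑m : V) x}
      with hA
    set B0 : Finset V := (T.ancFinset i₀).erase T.root with hB0
    have F5 : ∀ m ∈ s, ∀ j, T.anc (↑m : V) j → wA T p f A j = gg T p f j := by
      intro m hms j hj
      rw [wA, ← tele hf0 j]
      apply Finset.sum_congr rfl
      intro i hi
      have hanc_ij := T.anc_of_mem_ancFinset hi
      by_cases hiA : i ∈ A ∧ i ≠ T.root
      · rw [if_pos hiA, if_pos hiA.2]
      · by_cases hiroot : i ≠ T.root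
        swap
        · rw [if_neg hiA, if_neg hiroot]
        · rw [if_neg hiA, if_pos hiroot]
          have hinA : i ∉ A := fun h => hiA ⟨h, hiroot⟩
          rcases T.anc_comparable hanc_ij hj with hc | hc
          · rcases T.anc_comparable hc (m.2).2.2.1 with hd | hd
            · exact ((hinA (Or.inl ⟨hd, hiroot⟩))).elim
            · have hii0 : i ≠ i₀ := by
                rintro rfl
                exact hinA (Or.inl ⟨T.anc_refl _, hiroot⟩)
              have him : i ≠ (↑m : V) := by
                rintro rfl
                exact hinA (Or.inr ⟨m, hms, T.anc_refl _⟩)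
              exact ((m.2).2.2.2 i hd hc hii0 him).symm
          · exact ((hinA (Or.inr ⟨m, hms, hc⟩))).elim
    have F8 : ∀ j, (∀ m ∈ s, ¬ T.anc (↑m : V) j) →
        wA T p f A j ≤ gg T p f i₀ := by
      intro j hnone
      have step1 : wA T p f A j ≤ ∑ x ∈ T.ancFinset j,
          (if x ∈ T.ancFinset i₀ ∧ x ≠ T.root then dlt T p f x else 0) := by
        rw [wA]
        apply Finset.sum_le_sum
        intro x hx
        by_cases hxA : x ∈ A ∧ x ≠ T.root
        · rw [if_pos hxA]
          rcases hxA.1 with hL | hU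
          · rw [if_pos ⟨T.mem_ancFinset_of_anc hL.1 hxA.2, hxA.2⟩]
          · obtain ⟨m, hms, hmx⟩ := hU
            exact ((hnone m hms (T.anc_trans hmx (T.anc_of_mem_ancFinset hx)))).elim
        · rw [if_neg hxA]
          by_cases h2 : x ∈ T.ancFinset i₀ ∧ x ≠ T.root
          · rw [if_pos h2]; exact dlt_nonneg x
          · rw [if_neg h2]
      refine le_trans step1 ?_
      have step2 : (∑ x ∈ T.ancFinset j,
            (if x ∈ T.ancFinset i₀ ∧ x ≠ T.root then dlt T p f x else 0))
          = ∑ x ∈ T.ancFinset j ∩ T.ancFinset i₀,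
            (if x ∈ T.ancFinset i₀ ∧ x ≠ T.root then dlt T p f x else 0) := by
        refine (Finset.sum_subset (Finset.inter_subset_left) ?_).symm
        intro x hx hnx
        apply if_neg
        intro hcond
        exact hnx (Finset.mem_inter.mpr ⟨hx, hcond.1⟩)
      rw [step2]
      calc (∑ x ∈ T.ancFinset j ∩ T.ancFinset i₀,
            (if x ∈ T.ancFinset i₀ ∧ x ≠ T.root then dlt T p f x else 0))
          ≤ ∑ x ∈ T.ancFinset i₀,
            (if x ∈ T.ancFinset i₀ ∧ x ≠ T.root then dlt T p f x else 0) := by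
            apply Finset.sum_le_sum_of_subset_of_nonneg (Finset.inter_subset_right)
            intro x _ _
            by_cases h2 : x ∈ T.ancFinset i₀ ∧ x ≠ T.root
            · rw [if_pos h2]; exact dlt_nonneg x
            · rw [if_neg h2]
        _ ≤ ∑ x ∈ T.ancFinset i₀, (if x ≠ T.root then dlt T p f x else 0) := by
            apply Finset.sum_le_sum
            intro x _
            by_cases h2 : x ∈ T.ancFinset i₀ ∧ x ≠ T.root
            · rw [if_pos h2, if_pos h2.2]
            · rw [if_neg h2]
              by_cases h3 : x ≠ T.root
              · rw [if_pos h3]; exact dlt_nonneg x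
              · rw [if_neg h3]
        _ = gg T p f i₀ := tele hf0 i₀
    have HF : ∀ i, i ∈ A → i ≠ T.root → 0 < dlt T p f i → i ∉ B0 →
        ∀ j, T.anc i j → wA T p f A j = gg T p f j := by
      intro i hiA hiroot hd hiB j hij
      rcases hiA with hL | hU
      · exact (hiB (Finset.mem_erase.mpr
          ⟨hiroot, T.mem_ancFinset_of_anc hL.1 hiroot⟩)).elim
      · obtain ⟨m, hms, hmi⟩ := hU
        exact F5 m hms j (T.anc_trans hmi hij)
    have hXge : ((n:ℝ≥0∞)+1) ≤ XP μ p (wA T p f A) := by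
      refine le_trans hs ?_
      have hswap : (∑ m ∈ s, PX T μ p f ↑m)
          = ∑' j : V, ∑ m ∈ s,
            (if T.anc (↑m : V) j then ENNReal.ofReal (μ j * (gg T p f j)^p) else 0) := by
        rw [Summable.tsum_finsetSum (fun m _ => ENNReal.summable)]
        simp only [PX]
      rw [hswap, XP]
      apply ENNReal.tsum_le_tsum
      intro j
      by_cases hex : ∃ m ∈ s, T.anc (↑m : V) j
      · obtain ⟨mh, hmhs, hmhanc⟩ := hex
        have hsingle : (∑ m ∈ s,
            (if T.anc (↑m : V) j then ENNReal.ofReal (μ j * (gg T p f j)^p) else 0))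
            = ENNReal.ofReal (μ j * (gg T p f j)^p) := by
          rw [Finset.sum_eq_single_of_mem mh hmhs]
          · exact if_pos hmhanc
          · intro m hms hne
            apply if_neg
            intro hanc
            exact F2 ↑m m.2 ↑mh mh.2 (fun h => hne (Subtype.ext h)) j hanc hmhanc
        rw [hsingle, ← F5 mh hmhs j hmhanc]
        exact le_of_eq (by rw [abs_of_nonneg (wA_nonneg A j)])
      · push_neg at hex
        have hz : (∑ m ∈ s,
            (if T.anc (↑m : V) j then ENNReal.ofReal (μ j * (gg T p f j)^p) else 0)) = 0 :=
          Finset.sum_eq_zero (fun m hms => if_neg (hex m hms))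
        rw [hz]; exact zero_le
    have hX0 : XP μ p (wA T p f A) ≠ 0 := by
      intro h; rw [h] at hXge
      simp at hXge
    have hXt : XP μ p (wA T p f A) ≠ ⊤ := by
      have hpt : ∀ j : V, ENNReal.ofReal (μ j * |wA T p f A j|^p)
          ≤ ENNReal.ofReal ((gg T p f i₀)^p) * ENNReal.ofReal (μ j)
            + ∑ m ∈ s,
              (if T.anc (↑m : V) j then ENNReal.ofReal (μ j * (gg T p f j)^p) else 0) := by
        intro j
        by_cases hex : ∃ m ∈ s, T.anc (↑m : V) j
        · obtain ⟨mh, hmhs, hmhanc⟩ := hex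
          apply le_add_left
          have hsingle : (∑ m ∈ s,
              (if T.anc (↑m : V) j then ENNReal.ofReal (μ j * (gg T p f j)^p) else 0))
              = ENNReal.ofReal (μ j * (gg T p f j)^p) := by
            rw [Finset.sum_eq_single_of_mem mh hmhs]
            · exact if_pos hmhanc
            · intro m hms hne
              apply if_neg
              intro hanc
              exact F2 ↑m m.2 ↑mh mh.2 (fun h => hne (Subtype.ext h)) j hanc hmhanc
          rw [hsingle, ← F5 mh hmhs j hmhanc]
          exact le_of_eq (by rw [abs_of_nonneg (wA_nonneg A j)])
        · push_neg at hex
          apply le_add_right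
          have h8 := F8 j hex
          rw [abs_of_nonneg (wA_nonneg A j),
            ← ENNReal.ofReal_mul (Real.rpow_nonneg (gg_nonneg i₀) p)]
          apply ENNReal.ofReal_le_ofReal
          refine le_trans (mul_le_mul_of_nonneg_left
            (Real.rpow_le_rpow (wA_nonneg A j) h8 hppos.le) (hμ j).le)
            (le_of_eq (mul_comm _ _))
      have hb : XP μ p (wA T p f A)
          ≤ ENNReal.ofReal ((gg T p f i₀)^p) * (∑' j : V, ENNReal.ofReal (μ j))
            + ∑ m ∈ s, PX T μ p f ↑m := by
        rw [XP]
        refine le_trans (ENNReal.tsum_le_tsum hpt) ?_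
        rw [ENNReal.tsum_add, ENNReal.tsum_mul_left,
          Summable.tsum_finsetSum (fun (m : {m : V // m ∈ J'}) (_ : m ∈ s) => ENNReal.summable)]
        simp only [PX]
        exact le_rfl
      have hfin : ENNReal.ofReal ((gg T p f i₀)^p) * (∑' j : V, ENNReal.ofReal (μ j))
          + ∑ m ∈ s, PX T μ p f ↑m ≠ ⊤ := by
        apply ENNReal.add_ne_top.mpr
        refine ⟨ENNReal.mul_ne_top ENNReal.ofReal_ne_top hmass, ?_⟩
        rw [← lt_top_iff_ne_top, ENNReal.sum_lt_top]
        intro m _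
        rw [lt_top_iff_ne_top]
        exact Hi2 ↑m m.2.1 m.2.2.2.1 m.2.2.1
      intro htop
      rw [htop] at hb
      exact hfin (top_le_iff.mp hb)
    have hkey := key_lemma hp hv hμ A B0 M hM HF
    have htest := test_le (v := v) hp (wA T p f A) (wA_root A) hX0 hXt
    have hC0fin : (∑ i ∈ B0, ENNReal.ofReal (v i * dlt T p f i ^ p)) ≠ ⊤ := by
      rw [← lt_top_iff_ne_top, ENNReal.sum_lt_top]
      intro i _; exact ENNReal.ofReal_lt_top
    calc lamP T v μ p ≤ Dp T v p (wA T p f A) / XP μ p (wA T p f A) := htest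
      _ ≤ ((∑ i ∈ B0, ENNReal.ofReal (v i * dlt T p f i ^ p))
            + M * XP μ p (wA T p f A)) / XP μ p (wA T p f A) :=
          ENNReal.div_le_div_right hkey _
      _ = (∑ i ∈ B0, ENNReal.ofReal (v i * dlt T p f i ^ p)) / XP μ p (wA T p f A)
            + (M * XP μ p (wA T p f A)) / XP μ p (wA T p f A) := ENNReal.add_div
      _ = (∑ i ∈ B0, ENNReal.ofReal (v i * dlt T p f i ^ p)) / XP μ p (wA T p f A)
            + M := by rw [mul_div_assoc, ENNReal.div_self hX0 hXt, mul_one]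
      _ ≤ (∑ i ∈ B0, ENNReal.ofReal (v i * dlt T p f i ^ p)) / ((n:ℝ≥0∞)+1) + M :=
          add_le_add_left (ENNReal.div_le_div_left hXge _) _
      _ = M + (∑ i ∈ B0, ENNReal.ofReal (v i * dlt T p f i ^ p)) / ((n:ℝ≥0∞)+1) :=
          add_comm _ _
  -- conclude
  set C0 := (∑ i ∈ (T.ancFinset i₀).erase T.root,
      ENNReal.ofReal (v i * dlt T p f i ^ p)) with hC0def
  have hC0fin : C0 ≠ ⊤ := by
    rw [hC0def, ← lt_top_iff_ne_top, ENNReal.sum_lt_top]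
    intro i _; exact ENNReal.ofReal_lt_top
  apply ENNReal.le_of_forall_pos_le_add
  intro ε hε _
  have hε0 : (ε : ℝ≥0∞) ≠ 0 := by
    simpa using hε.ne'
  obtain ⟨n, hn⟩ := ENNReal.exists_nat_gt
    (show C0 / (ε : ℝ≥0∞) ≠ ⊤ from (ENNReal.div_lt_top hC0fin hε0).ne)
  have hC0n : C0 / ((n:ℝ≥0∞)+1) ≤ (ε : ℝ≥0∞) := by
    have h1 : C0 < (n:ℝ≥0∞) * ε :=
      (ENNReal.div_lt_iff (Or.inl hε0) (Or.inl ENNReal.coe_ne_top)).mp hn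
    rw [ENNReal.div_le_iff_le_mul (Or.inl (by simp)) (Or.inl (by simp))]
    calc C0 ≤ (n:ℝ≥0∞) * ε := h1.le
      _ ≤ ((n:ℝ≥0∞)+1) * ε := mul_le_mul_left (by simp) _
      _ = (ε:ℝ≥0∞) * ((n:ℝ≥0∞)+1) := mul_comm _ _
  exact le_trans (hstep n) (add_le_add_right hC0n M)

end BAD


/-- Upper bound half of the single-summation variational formula:
for `f ∈ 𝔉̃_I`, `λ_p ≤ sup_{i ≠ o} I_i(f)⁻¹`. -/
theorem lamP_le_sup_Iop_inv {V : Type} (T : PTree V) (v μ : V → ℝ) (p : ℝ)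
    (hp : 1 < p) (hv : ∀ i, 0 < v i) (hμ : ∀ i, 0 < μ i)
    (hmass : (∑' k : V, ENNReal.ofReal (μ k)) ≠ ⊤)
    (f : V → ℝ) (hf0 : f T.root = 0)
    (hf : ∃ k, k ≠ T.root ∧
      (∀ i, i ≠ T.root → T.anc i k → f (T.par i) < f i) ∧
      (∀ i, T.level k < T.level i → f i = f (T.par i))) :
    lamP T v μ p ≤ ⨆ i : {i : V // i ≠ T.root}, (Iop T v μ p f i.1)⁻¹ := by
  classical
  obtain ⟨k, hk, hf1, hf2⟩ := hf
  by_cases hMtop : (⨆ i : {i : V // i ≠ T.root}, (Iop T v μ p f i.1)⁻¹) = ⊤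
  · rw [hMtop]; exact le_top
  set M := ⨆ i : {i : V // i ≠ T.root}, (Iop T v μ p f i.1)⁻¹ with hMdef
  have hΔk : 0 < f k - f (T.par k) := sub_pos.2 (hf1 k hk (T.anc_refl k))
  have hfk : 0 < f k := ((path_pos hf0 hf1 k (T.anc_refl k)).2 hk)
  have hconst : ∀ j, T.anc k j → f j = f k := f_const_on hk hf2
  have hDk0 : ENNReal.ofReal (v k * (f k - f (T.par k)) ^ (p-1)) ≠ 0 := by
    refine (ENNReal.ofReal_pos.mpr ?_).ne'
    exact mul_pos (hv k) (Real.rpow_pos_of_pos hΔk _)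
  have hNIk : NI T μ p f k ≠ ⊤ := by
    have hb : NI T μ p f k
        ≤ ENNReal.ofReal ((f k)^(p-1)) * (∑' j : V, ENNReal.ofReal (μ j)) := by
      rw [NI, ← ENNReal.tsum_mul_left]
      apply ENNReal.tsum_le_tsum
      intro j
      by_cases hanc : T.anc k j
      · rw [if_pos hanc, hconst j hanc, mul_comm (μ j),
          ENNReal.ofReal_mul (Real.rpow_nonneg hfk.le _)]
      · rw [if_neg hanc]; exact zero_le
    exact ne_top_of_le_ne_top (ENNReal.mul_ne_top ENNReal.ofReal_ne_top hmass) hb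
  have hIopk : Iop T v μ p f k ≠ ⊤ := by
    rw [Iop_eq]
    exact (ENNReal.div_lt_top hNIk hDk0).ne
  have hM0 : M ≠ 0 := by
    have h1 : 0 < (Iop T v μ p f k)⁻¹ := ENNReal.inv_pos.mpr hIopk
    have h2 : (Iop T v μ p f k)⁻¹ ≤ M :=
      le_iSup (fun i : {i : V // i ≠ T.root} => (Iop T v μ p f i.1)⁻¹) ⟨k, hk⟩
    exact (lt_of_lt_of_le h1 h2).ne'
  have hM : ∀ i, i ≠ T.root →
      ENNReal.ofReal (v i * (f i - f (T.par i)) ^ (p-1)) ≤ M * NI T μ p f i := by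
    intro i hi
    have hle : (Iop T v μ p f i)⁻¹ ≤ M :=
      le_iSup (fun i : {i : V // i ≠ T.root} => (Iop T v μ p f i.1)⁻¹) ⟨i, hi⟩
    have hNI0 : NI T μ p f i ≠ 0 := by
      intro h0
      have hz : Iop T v μ p f i = 0 := by rw [Iop_eq, h0, ENNReal.zero_div]
      rw [hz, ENNReal.inv_zero] at hle
      exact hMtop (top_le_iff.mp hle)
    by_cases hNIt : NI T μ p f i = ⊤
    · rw [hNIt, ENNReal.mul_top hM0]; exact le_top
    · have h1 : (Iop T v μ p f i)⁻¹
          = ENNReal.ofReal (v i * (f i - f (T.par i)) ^ (p-1)) / NI T μ p f i := by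
        rw [Iop_eq, ENNReal.inv_div (Or.inl ENNReal.ofReal_ne_top) (Or.inr hNI0)]
      rw [h1] at hle
      exact (ENNReal.div_le_iff_le_mul (Or.inl hNI0) (Or.inl hNIt)).mp hle
  by_cases hXG : XP μ p (gg T p f) = ⊤
  · exact bad_case hp hv hμ hmass hf0 hf2 M hM hXG
  · have hwaeq : ∀ j, wA T p f Set.univ j = gg T p f j := by
      intro j
      rw [wA, ← tele hf0 j]
      apply Finset.sum_congr rfl
      intro i _
      by_cases h2 : i ≠ T.root
      · rw [if_pos ⟨Set.mem_univ i, h2⟩, if_pos h2]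
      · rw [if_neg (fun hc => h2 hc.2), if_neg h2]
    have hwfun : wA T p f Set.univ = gg T p f := funext hwaeq
    have hXG0 : XP μ p (gg T p f) ≠ 0 := by
      have hterm : 0 < ENNReal.ofReal (μ k * |gg T p f k|^p) := by
        apply ENNReal.ofReal_pos.mpr
        apply mul_pos (hμ k)
        apply Real.rpow_pos_of_pos
        rw [abs_of_nonneg (gg_nonneg k)]
        exact lt_of_lt_of_le hfk (le_trans (f_le_hh k) (hh_le_gg k))
      intro h0
      rw [XP] at h0
      exact hterm.ne' (ENNReal.tsum_eq_zero.mp h0 k)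
    have hkey := key_lemma hp hv hμ Set.univ ∅ M hM (fun i _ _ _ _ j _ => hwaeq j)
    rw [hwfun, Finset.sum_empty, zero_add] at hkey
    have htest := test_le (v := v) hp (gg T p f) (gg_root hf0) hXG0 hXG
    calc lamP T v μ p ≤ Dp T v p (gg T p f) / XP μ p (gg T p f) := htest
      _ ≤ (M * XP μ p (gg T p f)) / XP μ p (gg T p f) :=
          ENNReal.div_le_div_right hkey _
      _ = M := by rw [mul_div_assoc, ENNReal.div_self hXG0 hXG, mul_one]
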